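/- Let n ≥ 1, let W be a topological space, and let b_1, …, b_n : W → M_n(ℂ) be continuous maps such that for every s ∈ W the matrices b_1(s), …, b_n(s) are nonzero self-adjoint idempotents (orthogonal projections) with b_i(s) b_j(s) = 0 whenever i ≠ j. Suppose ζ_1, …, ζ_n ∈ ℂⁿ are vectors such that b_i(s) ζ_i ≠ 0 for all 1 ≤ i ≤ n and all s ∈ W. Then there exists a continuous map U : W → U(n) into the unitary group of M_n(ℂ) such that U(s)* b_i(s) U(s) = E_{ii} for all s ∈ W and all 1 ≤ i ≤ n, where E_{ii} denotes the matrix unit with entry 1 in position (i, i) and 0 elsewhere; explicitly, one may take U(s) to be the matrix whose j-th column is b_j(s) ζ_j / ‖b_j(s) ζ_j‖. -/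

import Mathlib

set_option maxHeartbeats 1000000
set_option maxRecDepth 10000

open scoped Matrix

noncomputable section

/-- The Euclidean (ℓ²) norm of a vector in `ℂⁿ`. -/
def vecNorm {n : ℕ} (v : Fin n → ℂ) : ℝ := ‖(WithLp.equiv 2 (Fin n → ℂ)).symm v‖

theorem vecNorm_eq {n : ℕ} (v : Fin n → ℂ) : vecNorm v = Real.sqrt (∑ i, ‖v i‖ ^ 2) := by
  rw [vecNorm, EuclideanSpace.norm_eq]; rfl

theorem vecNorm_pos {n : ℕ} {v : Fin n → ℂ} (hv : v ≠ 0) : 0 < vecNorm v := by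
  rw [vecNorm, norm_pos_iff]
  intro h
  apply hv
  have := congrArg (WithLp.equiv 2 (Fin n → ℂ)) h
  simpa using this

theorem sum_conj_mul_self {n : ℕ} (v : Fin n → ℂ) :
    (∑ p, (starRingEnd ℂ) (v p) * v p) = ((vecNorm v : ℝ) : ℂ) ^ 2 := by
  rw [vecNorm_eq]
  have h : ∀ p, (starRingEnd ℂ) (v p) * v p = ((‖v p‖ ^ 2 : ℝ) : ℂ) := by
    intro p
    rw [mul_comm, Complex.mul_conj]
    push_cast [Complex.normSq_eq_norm_sq]
    ring
  simp only [h]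
  rw [← Complex.ofReal_sum, ← Complex.ofReal_pow, Real.sq_sqrt]
  positivity

theorem sum_conj_smul {n : ℕ} (a d : ℂ) (x y : Fin n → ℂ) :
    (∑ p, star (a * x p) * (d * y p)) =
      star a * d * ∑ p, (starRingEnd ℂ) (x p) * y p := by
  rw [Finset.mul_sum]
  refine Finset.sum_congr rfl fun p _ => ?_
  simp only [star_mul', starRingEnd_apply]
  ring

/-- Let `n ≥ 1`, `W` a topological space, and `b₁, …, bₙ : W → Mₙ(ℂ)`
continuous maps such that for every `s ∈ W` the matrices `b₁(s), …, bₙ(s)` are nonzero pairwise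
orthogonal (self-adjoint idempotent) projections. If `ζ₁, …, ζₙ ∈ ℂⁿ` satisfy `bᵢ(s) ζᵢ ≠ 0`
for all `i` and `s`, then there is a continuous map `U : W → U(n)` with
`U(s)* bᵢ(s) U(s) = Eᵢᵢ` for all `s, i`; explicitly, the `j`-th column of `U(s)` is
`bⱼ(s) ζⱼ / ‖bⱼ(s) ζⱼ‖`. -/
theorem exists_continuous_unitary_diagonalizing_projections
    (n : ℕ) (hn : 1 ≤ n) (W : Type*) [TopologicalSpace W]
    (b : Fin n → W → Matrix (Fin n) (Fin n) ℂ)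
    (hbcont : ∀ i, Continuous (b i))
    (hbsa : ∀ i s, (b i s)ᴴ = b i s)
    (hbidem : ∀ i s, b i s * b i s = b i s)
    (hbne : ∀ i s, b i s ≠ 0)
    (hborth : ∀ i j, i ≠ j → ∀ s, b i s * b j s = 0)
    (ζ : Fin n → (Fin n → ℂ))
    (hζ : ∀ i s, (b i s).mulVec (ζ i) ≠ 0) :
    ∃ U : W → Matrix (Fin n) (Fin n) ℂ,
      Continuous U ∧
      (∀ s, U s ∈ Matrix.unitaryGroup (Fin n) ℂ) ∧
      (∀ s i, star (U s) * b i s * U s = (Matrix.single i i 1 :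
        Matrix (Fin n) (Fin n) ℂ)) ∧
      (∀ s j i, U s i j = ((vecNorm ((b j s).mulVec (ζ j)) : ℂ))⁻¹ *
        (b j s).mulVec (ζ j) i) := by
  -- the (unnormalized) columns
  set v : Fin n → W → (Fin n → ℂ) := fun j s => (b j s).mulVec (ζ j) with hv
  -- the normalizing constants
  set c : Fin n → W → ℂ := fun j s => ((vecNorm (v j s) : ℝ) : ℂ)⁻¹ with hc
  have hNpos : ∀ j s, 0 < vecNorm (v j s) := fun j s => vecNorm_pos (hζ j s)
  have hcne : ∀ j s, ((vecNorm (v j s) : ℝ) : ℂ) ≠ 0 := fun j s =>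
    Complex.ofReal_ne_zero.mpr (ne_of_gt (hNpos j s))
  have hconj_c : ∀ j s, star (c j s) = c j s := by
    intro j s
    rw [hc]
    simp only [star_inv₀]
    rw [← starRingEnd_apply, Complex.conj_ofReal]
  -- the key inner-product computation
  have hdot : ∀ s (k l : Fin n), (∑ p, (starRingEnd ℂ) (v k s p) * v l s p) =
      if k = l then ((vecNorm (v k s) : ℝ) : ℂ) ^ 2 else 0 := by
    intro s k l
    by_cases hkl : k = l
    · subst hkl
      rw [if_pos rfl]
      exact sum_conj_mul_self (v k s)
    · rw [if_neg hkl]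
      have h1 : (∑ p, (starRingEnd ℂ) (v k s p) * v l s p) =
          dotProduct (star (v k s)) (v l s) := by
        refine Finset.sum_congr rfl fun p _ => ?_
        rw [Pi.star_apply, starRingEnd_apply]
      rw [h1, hv]
      rw [Matrix.star_mulVec, Matrix.dotProduct_mulVec, Matrix.vecMul_vecMul]
      rw [hbsa, hborth k l hkl s, Matrix.vecMul_zero, zero_dotProduct]
  set U0 : W → Matrix (Fin n) (Fin n) ℂ :=
    fun s => Matrix.of (fun i j => c j s * v j s i) with hU0
  have hU0app : ∀ s i j, U0 s i j = c j s * v j s i := fun s i j => rfl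
  -- columns of b i s * U0 s
  have hBU : ∀ s (i : Fin n) p l, (b i s * U0 s) p l =
      if i = l then c l s * v l s p else 0 := by
    intro s i p l
    rw [Matrix.mul_apply]
    have h2 : (∑ q, b i s p q * U0 s q l) =
        c l s * ((b i s * b l s).mulVec (ζ l)) p := by
      rw [← Matrix.mulVec_mulVec]
      have h3 : ((b i s).mulVec ((b l s).mulVec (ζ l))) p =
          ∑ q, b i s p q * v l s q := rfl
      rw [h3, Finset.mul_sum]
      refine Finset.sum_congr rfl fun q _ => ?_
      rw [hU0app]
      ring
    rw [h2]
    by_cases hil : i = l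
    · subst hil
      rw [hbidem, if_pos rfl]
    · rw [hborth i l hil s, if_neg hil]
      simp
  -- the star-column inner products
  have hSUU : ∀ s (k l : Fin n), (∑ p, star (U0 s p k) * U0 s p l) =
      if k = l then 1 else 0 := by
    intro s k l
    have h4 : (∑ p, star (U0 s p k) * U0 s p l) =
        star (c k s) * c l s * ∑ p, (starRingEnd ℂ) (v k s p) * v l s p := by
      simp only [hU0app]
      exact sum_conj_smul _ _ _ _
    rw [h4, hdot s k l]
    by_cases hkl : k = l
    · subst hkl
      rw [if_pos rfl, if_pos rfl, hconj_c, hc]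
      field_simp
      rw [div_self (hcne k s)]
    · rw [if_neg hkl, if_neg hkl, mul_zero]
  refine ⟨U0, ?_, ?_, ?_, ?_⟩
  · -- continuity
    apply continuous_matrix
    intro i j
    have hvcont : ∀ p, Continuous (fun s => v j s p) := by
      intro p
      simp only [hv, Matrix.mulVec, dotProduct]
      exact continuous_finset_sum _ fun q _ =>
        (((continuous_apply_apply p q).comp (hbcont j)).mul continuous_const)
    have hNcont : Continuous (fun s => vecNorm (v j s)) := by
      simp only [vecNorm_eq]
      exact (continuous_finset_sum _ fun p _ => ((hvcont p).norm.pow 2)).sqrt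
    have hccont : Continuous (fun s => c j s) :=
      (Complex.continuous_ofReal.comp hNcont).inv₀ fun s => hcne j s
    exact hccont.mul (hvcont i)
  · -- unitarity
    intro s
    rw [Matrix.mem_unitaryGroup_iff']
    ext k l
    rw [Matrix.mul_apply, Matrix.one_apply]
    rw [← hSUU s k l]
    refine Finset.sum_congr rfl fun p _ => ?_
    rw [Matrix.star_apply]
  · -- conjugation
    intro s i
    ext k l
    rw [mul_assoc, Matrix.mul_apply]
    have h5 : (∑ p, star (U0 s) k p * (b i s * U0 s) p l) =
        ∑ p, star (U0 s p k) * (if i = l then c l s * v l s p else 0) := by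
      refine Finset.sum_congr rfl fun p _ => ?_
      rw [Matrix.star_apply, hBU]
    rw [h5]
    by_cases hil : i = l
    · subst hil
      simp only [eq_self_iff_true, if_true]
      have h6 : (∑ p, star (U0 s p k) * (c i s * v i s p)) =
          if k = i then 1 else 0 := by
        rw [← hSUU s k i]
        exact Finset.sum_congr rfl fun p _ => rfl
      rw [h6]
      by_cases hki : k = i
      · subst hki
        rw [if_pos rfl, Matrix.single_apply_same]
      · rw [if_neg hki]
        rw [Matrix.single_apply_of_ne]
        intro h
        exact hki h.1.symm
    · simp only [if_neg hil, mul_zero, Finset.sum_const_zero]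
      rw [eq_comm]
      rw [Matrix.single_apply_of_ne]
      intro h
      exact hil h.2
  · -- formula
    intro s j i
    rw [hU0app, hc]

end
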